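/- Let A be a nontrivial abelian group and let Γ be a finitely generated infinite group. Then every surjective group homomorphism φ : A ≀ Γ → A ≀ Γ is basic, i.e. φ maps the base group Γ →₀ A into the base group Γ →₀ A. -/

import Mathlib

/-- A group is Hopfian if every surjective endomorphism is injective. -/
def IsHopfian (G : Type*) [Group G] : Prop :=
  ∀ φ : G →* G, Function.Surjective φ → Function.Injective φ

/-- A unital ring is directly finite if `x * y = 1` implies `y * x = 1`. -/
def DirectlyFinite (R : Type*) [Ring R] : Prop :=
  ∀ x y : R, x * y = 1 → y * x = 1

/-- The action of `Γ` on the base group `Γ →₀ A` of the wreath product,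
given by `(g • f) x = f (g⁻¹ * x)`. -/
noncomputable def wreathAction (A : Type*) [AddCommGroup A] (Γ : Type*) [Group Γ] :
    Γ →* MulAut (Multiplicative (Γ →₀ A)) where
  toFun g := AddEquiv.toMultiplicative (Finsupp.domCongr (Equiv.mulLeft g))
  map_one' := by
    apply MulEquiv.ext
    intro f
    apply Multiplicative.toAdd.injective
    apply Finsupp.ext
    intro x
    simp [Finsupp.domCongr_apply]
    rfl
  map_mul' g₁ g₂ := by
    apply MulEquiv.ext
    intro f
    apply Multiplicative.toAdd.injective
    apply Finsupp.ext
    intro x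
    simp [Finsupp.domCongr_apply, mul_assoc]
    rfl

/-- The (restricted) wreath product `A ≀ Γ`: the semidirect product of the group
`Γ →₀ A` of finitely supported functions `Γ → A` (pointwise addition) by `Γ`,
acting by `(g • f) x = f (g⁻¹ * x)`. -/
abbrev WreathProduct (A : Type*) [AddCommGroup A] (Γ : Type*) [Group Γ] : Type _ :=
  SemidirectProduct (Multiplicative (Γ →₀ A)) Γ (wreathAction A Γ)

/-- The base group `Γ →₀ A` of the wreath product, as a subgroup of `A ≀ Γ`. -/
noncomputable def WreathProduct.base (A : Type*) [AddCommGroup A] (Γ : Type*) [Group Γ] :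
    Subgroup (WreathProduct A Γ) :=
  (SemidirectProduct.inl : Multiplicative (Γ →₀ A) →* WreathProduct A Γ).range

namespace WreathAux
open SemidirectProduct Finsupp Multiplicative

variable {A : Type*} [AddCommGroup A] {Γ : Type*} [Group Γ]

/-- wreath action as plain function -/
noncomputable abbrev wa (g : Γ) (m : Multiplicative (Γ →₀ A)) : Multiplicative (Γ →₀ A) :=
  wreathAction A Γ g m

lemma toAdd_wa (g : Γ) (m : Multiplicative (Γ →₀ A)) (z : Γ) :
    (toAdd (wa g m)) z = (toAdd m) (g⁻¹ * z) := rfl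

/-- single generator -/
noncomputable abbrev sg (x : Γ) (a : A) : Multiplicative (Γ →₀ A) := ofAdd (Finsupp.single x a)

open scoped Classical in
lemma toAdd_sg (x : Γ) (a : A) (z : Γ) : (toAdd (sg x a)) z = if x = z then a else 0 :=
  Finsupp.single_apply

lemma wa_sg (g x : Γ) (a : A) : wa g (sg x a) = sg (g*x) a := by
  classical
  apply Multiplicative.toAdd.injective
  apply Finsupp.ext
  intro z
  rw [toAdd_wa, toAdd_sg, toAdd_sg]
  have : (x = g⁻¹ * z) = (g*x = z) := by
    apply propext; rw [eq_inv_mul_iff_mul_eq]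
  rw [this]

lemma wa_mul (g : Γ) (m n : Multiplicative (Γ →₀ A)) : wa g (m*n) = wa g m * wa g n :=
  map_mul _ _ _

lemma wa_inv (g : Γ) (m : Multiplicative (Γ →₀ A)) : wa g m⁻¹ = (wa g m)⁻¹ :=
  map_inv _ _

lemma wa_wa (g h : Γ) (m : Multiplicative (Γ →₀ A)) : wa g (wa h m) = wa (g*h) m := by
  show (wreathAction A Γ g) ((wreathAction A Γ h) m) = (wreathAction A Γ (g*h)) m
  rw [← MulAut.mul_apply, ← map_mul]

lemma wa_one (m : Multiplicative (Γ →₀ A)) : wa 1 m = m := by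
  show (wreathAction A Γ 1) m = m
  rw [map_one]; rfl

lemma commute_inl_iff (m : Multiplicative (Γ →₀ A)) (x : WreathProduct A Γ) :
    inl m * x = x * inl m ↔ wa x.right m = m := by
  constructor
  · intro h
    have h1 := congrArg SemidirectProduct.left h
    simp only [mul_left, right_inl, left_inl, map_one, MulAut.one_apply] at h1
    -- h1 : m * x.left = x.left * wa x.right m
    rw [mul_comm x.left _] at h1
    exact (mul_right_cancel h1).symm
  · intro h
    apply SemidirectProduct.ext
    · simp only [mul_left, right_inl, left_inl, map_one, MulAut.one_apply]
      rw [show wreathAction A Γ x.right m = m from h]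
      exact mul_comm _ _
    · simp only [mul_right, right_inl, one_mul, mul_one]

lemma conj_inl_general (x : WreathProduct A Γ) (c : Multiplicative (Γ →₀ A)) :
    x * inl c * x⁻¹ = inl (wa x.right c) := by
  apply SemidirectProduct.ext
  · show (x.left * wa x.right c) * wa (x.right * 1) (wa x.right⁻¹ x.left⁻¹) = wa x.right c
    rw [mul_one, wa_wa, mul_inv_cancel, wa_one, mul_comm x.left (wa x.right c), mul_assoc,
      mul_inv_cancel, mul_one]
  · show x.right * 1 * x.right⁻¹ = 1
    simp

lemma conj_inl_eq (b : Multiplicative (Γ →₀ A)) (x : WreathProduct A Γ) :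
    inl b * x * (inl b)⁻¹ = inl (b * (wa x.right b)⁻¹) * x := by
  have h1 := conj_inl_general x b⁻¹
  calc inl b * x * (inl b)⁻¹ = inl b * (x * inl b⁻¹ * x⁻¹) * x := by
        rw [← map_inv inl]; simp [mul_assoc]
    _ = inl b * inl (wa x.right b⁻¹) * x := by rw [h1]
    _ = inl (b * (wa x.right b)⁻¹) * x := by rw [← map_mul, wa_inv]

lemma wa_unit (g : Γ) : wa g (1 : Multiplicative (Γ →₀ A)) = 1 := map_one _

lemma commute_left_of {x y : WreathProduct A Γ} (h : x * y = y * x) :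
    x.left * wa x.right y.left = y.left * wa y.right x.left := congrArg SemidirectProduct.left h

lemma commute_right_of {x y : WreathProduct A Γ} (h : x * y = y * x) :
    x.right * y.right = y.right * x.right := congrArg SemidirectProduct.right h

lemma conj_inr_eq (g : Γ) (x : WreathProduct A Γ) :
    inr g * x * (inr g)⁻¹ = ⟨wa g x.left, g * x.right * g⁻¹⟩ := by
  ext <;> simp

lemma eq_one_of_forall_wa [Infinite Γ] (m : Multiplicative (Γ →₀ A))
    (hm : ∀ h : Γ, wa h m = m) : m = 1 := by
  by_contra hne
  have h0 : toAdd m ≠ 0 := fun hc => hne (Multiplicative.toAdd.injective (by rw [hc]; rfl))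
  obtain ⟨x, hx⟩ := Finsupp.ne_iff.mp h0
  rw [Finsupp.coe_zero, Pi.zero_apply] at hx
  have hmem : ∀ h : Γ, (h⁻¹ * x) ∈ (toAdd m).support := by
    intro h
    rw [Finsupp.mem_support_iff]
    have h2 := DFunLike.congr_fun (congrArg toAdd (hm h)) x
    rw [toAdd_wa] at h2
    rw [h2]; exact hx
  have hinj : Function.Injective (fun h : Γ => h⁻¹ * x) := by
    intro h₁ h₂ he
    simp only [] at he
    have := mul_right_cancel he
    exact inv_injective this
  have hinf := Set.infinite_of_injective_forall_mem hinj hmem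
  exact ((toAdd m).support.finite_toSet).not_infinite hinf

lemma sq_one (e2 : ∀ a : A, a + a = 0) (m : Multiplicative (Γ →₀ A)) : m * m = 1 := by
  apply Multiplicative.toAdd.injective
  apply Finsupp.ext
  intro z
  show (toAdd m + toAdd m) z = (0 : Γ →₀ A) z
  rw [Finsupp.add_apply, e2, Finsupp.coe_zero, Pi.zero_apply]

lemma mapDomain_eq_zero {β : Type*} (f : Γ → β) {k : Γ} (hk : k ≠ 1) (hk2 : k * k = 1)
    (hf : ∀ z, f (k * z) = f z) {F : Γ →₀ A} (hinv : ∀ z, F (k * z) = F z)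
    (e2 : ∀ a : A, a + a = 0) : Finsupp.mapDomain f F = 0 := by
  classical
  rw [Finsupp.mapDomain]
  show ∑ a ∈ F.support, Finsupp.single (f a) (F a) = 0
  refine Finset.sum_involution (fun a _ => k * a) ?_ ?_ ?_ ?_
  · intro a _
    show Finsupp.single (f a) (F a) + Finsupp.single (f (k * a)) (F (k * a)) = 0
    rw [hf, hinv, ← Finsupp.single_add, e2, Finsupp.single_zero]
  · intro a _ hfa heq
    have heq' : k * a = a := heq
    exact hk (mul_right_cancel (heq'.trans (one_mul a).symm))
  · intro a ha
    show k * a ∈ F.support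
    rw [Finsupp.mem_support_iff] at ha ⊢
    rw [hinv]; exact ha
  · intro a _
    show k * (k * a) = a
    rw [← mul_assoc, hk2, one_mul]

lemma eq_one_of_forall_commute [Infinite Γ] [Nontrivial A] (w : WreathProduct A Γ)
    (hw : ∀ v, w * v = v * w) : w = 1 := by
  obtain ⟨a₀, ha₀⟩ := exists_ne (0 : A)
  have hr : w.right = 1 := by
    have h1 := (commute_inl_iff (sg 1 a₀) w).mp (hw (inl (sg 1 a₀))).symm
    rw [wa_sg, mul_one] at h1
    by_contra hne
    have h2 := DFunLike.congr_fun (congrArg toAdd h1) w.right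
    rw [toAdd_sg, toAdd_sg, if_pos rfl, if_neg (by exact fun hc => hne hc.symm)] at h2
    exact ha₀ h2
  have hl : ∀ h : Γ, wa h w.left = w.left := by
    intro h
    have h3 := commute_left_of (hw (inr h))
    simp only [left_inr, right_inr] at h3
    rw [wa_unit, mul_one, one_mul] at h3
    exact h3.symm
  have hleft := eq_one_of_forall_wa w.left hl
  rw [← inl_left_mul_inr_right w, hr, hleft]
  simp

open scoped Classical in
lemma eval2 (x₁ x₂ : Γ) (a₁ a₂ : A) (z : Γ) :
    toAdd ((sg x₁ a₁) * (sg x₂ a₂)⁻¹) z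
      = (if x₁ = z then a₁ else 0) - (if x₂ = z then a₂ else 0) := by
  show (Finsupp.single x₁ a₁ + -Finsupp.single x₂ a₂ : Γ →₀ A) z = _
  rw [Finsupp.add_apply, Finsupp.neg_apply, Finsupp.single_apply, Finsupp.single_apply,
    sub_eq_add_neg]

section Phi

variable {φ : WreathProduct A Γ →* WreathProduct A Γ}

lemma star (hφ : Function.Surjective φ) (y y' : Multiplicative (Γ →₀ A))
    (u v : WreathProduct A Γ) :
    (u * φ (inl y) * u⁻¹) * (v * φ (inl y') * v⁻¹)
      = (v * φ (inl y') * v⁻¹) * (u * φ (inl y) * u⁻¹) := by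
  obtain ⟨u', rfl⟩ := hφ u
  obtain ⟨v', rfl⟩ := hφ v
  have key : u' * inl y * u'⁻¹ * (v' * inl y' * v'⁻¹)
      = v' * inl y' * v'⁻¹ * (u' * inl y * u'⁻¹) := by
    rw [conj_inl_general, conj_inl_general, ← map_mul, ← map_mul, mul_comm]
  calc φ u' * φ (inl y) * (φ u')⁻¹ * (φ v' * φ (inl y') * (φ v')⁻¹)
      = φ (u' * inl y * u'⁻¹ * (v' * inl y' * v'⁻¹)) := by
        simp only [map_mul, map_inv]
    _ = φ (v' * inl y' * v'⁻¹ * (u' * inl y * u'⁻¹)) := by rw [key]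
    _ = φ v' * φ (inl y') * (φ v')⁻¹ * (φ u' * φ (inl y) * (φ u')⁻¹) := by
        simp only [map_mul, map_inv]

lemma fact2core (hφ : Function.Surjective φ) (y b : Multiplicative (Γ →₀ A)) :
    wa (φ (inl y)).right (b * (wa (φ (inl y)).right b)⁻¹)
      = b * (wa (φ (inl y)).right b)⁻¹ := by
  have h := star hφ y y (inl b) 1
  simp only [one_mul, inv_one, mul_one] at h
  rw [conj_inl_eq] at h
  rw [← mul_assoc] at h
  exact (commute_inl_iff _ _).mp (mul_right_cancel h)

lemma fact_ord [Nontrivial A] (hφ : Function.Surjective φ) (y : Multiplicative (Γ →₀ A))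
    {k : Γ} (hky : (φ (inl y)).right = k) (hy : k ≠ 1) :
    k * k = 1 ∧ (∀ a : A, a + a = 0) := by
  classical
  have key : ∀ a : A, -(if k * k = 1 then a else 0) = a := by
    intro a
    have h := fact2core hφ y (sg 1 a)
    rw [hky] at h
    simp only [wa_mul, wa_inv, wa_sg, mul_one] at h
    have h1 := DFunLike.congr_fun (congrArg toAdd h) 1
    rw [eval2, eval2, if_neg hy, if_pos rfl, zero_sub, sub_zero] at h1
    exact h1
  rcases eq_or_ne (k * k) 1 with h1 | h1
  · refine ⟨h1, fun a => ?_⟩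
    have hh := key a
    rw [if_pos h1] at hh
    exact neg_eq_iff_add_eq_zero.mp hh
  · exfalso
    obtain ⟨a, ha⟩ := exists_ne (0 : A)
    have hh := key a
    rw [if_neg h1, neg_zero] at hh
    exact ha hh.symm

lemma fact_central [Nontrivial A] (hφ : Function.Surjective φ)
    (y : Multiplicative (Γ →₀ A)) {k : Γ} (hky : (φ (inl y)).right = k) (h : Γ) :
    h * k = k * h := by
  classical
  rcases eq_or_ne k 1 with hk1 | hk1
  · rw [hk1, one_mul, mul_one]
  obtain ⟨hk2, _⟩ := fact_ord hφ y hky hk1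
  obtain ⟨a, ha⟩ := exists_ne (0 : A)
  have c2 := star hφ y y (inr h) 1
  simp only [one_mul, inv_one, mul_one] at c2
  have c1 := star hφ y y (inr h) (inl (sg 1 a))
  rw [conj_inl_eq] at c1
  have e : ((inr h * φ (inl y) * (inr h)⁻¹) * inl (sg 1 a * (wa (φ (inl y)).right (sg 1 a))⁻¹))
        * φ (inl y)
      = (inl (sg 1 a * (wa (φ (inl y)).right (sg 1 a))⁻¹) * (inr h * φ (inl y) * (inr h)⁻¹))
        * φ (inl y) := by
    rw [mul_assoc, c1, mul_assoc, ← c2, ← mul_assoc]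
  have e2 := mul_right_cancel e
  have winv := (commute_inl_iff _ _).mp e2.symm
  rw [conj_inr_eq] at winv
  rw [hky] at winv
  simp only [wa_mul, wa_inv, wa_sg, mul_one] at winv
  -- winv in terms of sg, evaluate
  have hk'1 : h * k * h⁻¹ ≠ 1 := by
    intro hc
    apply hk1
    have hcc : k = h⁻¹ * (h * k * h⁻¹) * h := by group
    rw [hc] at hcc
    simpa using hcc
  have h1 := DFunLike.congr_fun (congrArg toAdd winv) 1
  rw [eval2, eval2, if_neg hk'1, if_pos rfl, if_neg hk1, zero_sub, sub_zero] at h1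
  have hkk : h * k * h⁻¹ * k = 1 := by
    by_contra hc
    rw [if_neg hc, neg_zero] at h1
    exact ha h1.symm
  have hconj : h * k * h⁻¹ = k⁻¹ := eq_inv_of_mul_eq_one_left hkk
  rw [inv_eq_of_mul_eq_one_right hk2] at hconj
  exact mul_inv_eq_iff_eq_mul.mp hconj

lemma fact_inv [Nontrivial A] [Infinite Γ] (hφ : Function.Surjective φ)
    (y : Multiplicative (Γ →₀ A)) {k : Γ} {F : Multiplicative (Γ →₀ A)}
    (hky : (φ (inl y)).right = k) (hFy : (φ (inl y)).left = F) :
    wa k F = F := by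
  classical
  rcases eq_or_ne k 1 with hk1 | hk1
  · rw [hk1, wa_one]
  obtain ⟨hk2, e2⟩ := fact_ord hφ y hky hk1
  have hFF : F * F = 1 := sq_one e2 F
  have hu : ∀ h : Γ, wa h (F * wa k F) = F * wa k F := by
    intro h
    have c2 := star hφ y y (inr h) 1
    simp only [one_mul, inv_one, mul_one] at c2
    rw [conj_inr_eq] at c2
    have he := commute_left_of c2
    simp only [hky, hFy] at he
    -- he : wa h F * wa (h*k*h⁻¹) F = F * wa k (wa h F)  (modulo component reductions)
    have hcent : h * k * h⁻¹ = k := by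
      rw [mul_inv_eq_iff_eq_mul]
      exact fact_central hφ y hky h
    rw [hcent] at he
    have hx : wa h (F * wa k F) = wa h F * wa k (wa h F) := by
      rw [wa_mul, wa_wa, show h * k = k * h from fact_central hφ y hky h, ← wa_wa]
    rw [hx]
    have hP : wa h F * wa h F = 1 := sq_one e2 _
    apply Multiplicative.toAdd.injective
    have e1 := congrArg toAdd he
    have eP := congrArg toAdd hP
    have eF := congrArg toAdd hFF
    simp only [toAdd_mul, toAdd_one] at e1 eP eF ⊢
    set p := toAdd (wa h F)
    set q := toAdd (wa k (wa h F))
    set r := toAdd (wa k F)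
    set f := toAdd F
    have hq : q = p + r - f := by
      rw [eq_sub_iff_add_eq, add_comm q f, ← e1, add_comm]
    rw [hq, show p + (p + r - f) = (p + p) + (r - f) by abel, eP, zero_add, sub_eq_add_neg,
      neg_eq_of_add_eq_zero_left eF, add_comm]
  have hone := eq_one_of_forall_wa (F * wa k F) hu
  have h2 : wa k F = F⁻¹ := (mul_eq_one_iff_inv_eq.mp hone).symm
  rw [h2, inv_eq_of_mul_eq_one_right hFF]

end Phi

section QuotMap

lemma mapDomain_surj {α β : Type*} (f : α → β) (hf : Function.Surjective f) :
    Function.Surjective (Finsupp.mapDomain (M := A) f) := by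
  intro v
  induction v using Finsupp.induction with
  | zero => exact ⟨0, Finsupp.mapDomain_zero⟩
  | single_add x b v _ _ ih =>
    obtain ⟨w, hw⟩ := ih
    obtain ⟨x', hx'⟩ := hf x
    exact ⟨Finsupp.single x' b + w,
      by rw [Finsupp.mapDomain_add, Finsupp.mapDomain_single, hx', hw]⟩

variable (K : Subgroup Γ) [K.Normal]

/-- reduction of the base along `Γ → Γ ⧸ K`, as a `MonoidHom` on `Multiplicative`. -/
noncomputable def redHom : Multiplicative (Γ →₀ A) →* Multiplicative ((Γ ⧸ K) →₀ A) :=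
  AddMonoidHom.toMultiplicative (Finsupp.mapDomain.addMonoidHom (fun g : Γ => (g : Γ ⧸ K)))

lemma toAdd_redHom (m : Multiplicative (Γ →₀ A)) :
    toAdd (redHom (A := A) K m) = Finsupp.mapDomain (fun g : Γ => (g : Γ ⧸ K)) (toAdd m) := rfl

/-- the induced map of wreath products. -/
noncomputable def qmap : WreathProduct A Γ →* WreathProduct A (Γ ⧸ K) :=
  SemidirectProduct.map (redHom K) (QuotientGroup.mk' K) (by
    intro g
    apply MonoidHom.ext
    intro m
    apply Multiplicative.toAdd.injective
    show Finsupp.mapDomain (fun g : Γ => (g : Γ ⧸ K))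
        (Finsupp.equivMapDomain (Equiv.mulLeft g) (toAdd m))
      = Finsupp.equivMapDomain (Equiv.mulLeft ((g : Γ ⧸ K))) (Finsupp.mapDomain
          (fun g : Γ => (g : Γ ⧸ K)) (toAdd m))
    rw [Finsupp.equivMapDomain_eq_mapDomain, Finsupp.equivMapDomain_eq_mapDomain,
      ← Finsupp.mapDomain_comp, ← Finsupp.mapDomain_comp]
    congr 1)

lemma qmap_inl (m : Multiplicative (Γ →₀ A)) :
    qmap (A := A) K (inl m) = inl (redHom K m) := by
  simp [qmap]

lemma qmap_inr (g : Γ) : qmap (A := A) K (inr g) = inr ((g : Γ ⧸ K)) := by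
  simp [qmap]

lemma qmap_surjective : Function.Surjective (qmap (A := A) K) := by
  intro w
  obtain ⟨m, hm⟩ := mapDomain_surj (A := A) (fun g : Γ => (g : Γ ⧸ K))
    (fun c => QuotientGroup.mk'_surjective K c) (toAdd w.left)
  obtain ⟨g, hg⟩ := QuotientGroup.mk'_surjective K w.right
  refine ⟨inl (ofAdd m) * inr g, ?_⟩
  rw [map_mul, qmap_inl, qmap_inr]
  have h1 : redHom (A := A) K (ofAdd m) = w.left := by
    apply Multiplicative.toAdd.injective
    rw [toAdd_redHom]
    exact hm
  have hg' : (g : Γ ⧸ K) = w.right := hg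
  rw [h1, hg']
  exact inl_left_mul_inr_right w

/-- total sum homomorphism -/
noncomputable def sumHom {β : Type*} : (β →₀ A) →+ A :=
  Finsupp.liftAddHom (fun _ => AddMonoidHom.id A)

lemma sumHom_single {β : Type*} (c : β) (a : A) : sumHom (Finsupp.single c a) = a := by
  simp [sumHom]

lemma sumHom_equivMapDomain {β : Type*} (e : β ≃ β) (v : β →₀ A) :
    sumHom (Finsupp.equivMapDomain e v) = sumHom v := by
  induction v using Finsupp.induction with
  | zero => simp
  | single_add a b f _ _ ih =>
    have hadd : Finsupp.equivMapDomain e (Finsupp.single a b + f)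
        = Finsupp.equivMapDomain e (Finsupp.single a b) + Finsupp.equivMapDomain e f := by
      rw [← Finsupp.domCongr_apply, ← Finsupp.domCongr_apply, ← Finsupp.domCongr_apply, map_add]
    rw [hadd, map_add, Finsupp.equivMapDomain_single, sumHom_single, ih, map_add, sumHom_single]

end QuotMap

end WreathAux

open SemidirectProduct Multiplicative WreathAux

/-- Let `A` be a nontrivial abelian group and `Γ` a finitely generated infinite group.
Then every surjective endomorphism of `A ≀ Γ` is basic: it maps the base group into
the base group. -/
theorem surjective_endomorphism_isBasic (A : Type*) [AddCommGroup A] [Nontrivial A]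
    (Γ : Type*) [Group Γ] [Group.FG Γ] [Infinite Γ]
    (φ : WreathProduct A Γ →* WreathProduct A Γ) (hφ : Function.Surjective φ) :
    ∀ x ∈ WreathProduct.base A Γ, φ x ∈ WreathProduct.base A Γ := by
  classical
  have hbase : ∀ w : WreathProduct A Γ, w ∈ WreathProduct.base A Γ ↔ w.right = 1 := by
    intro w
    rw [WreathProduct.base, range_inl_eq_ker_rightHom, MonoidHom.mem_ker]
    exact Iff.rfl
  intro x hx
  obtain ⟨y₀, rfl⟩ := hx
  rw [hbase]
  by_contra hk₀
  obtain ⟨hk20, e2⟩ := fact_ord hφ y₀ rfl hk₀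
  -- the subgroup K = image of the base under right projection
  set κ : Multiplicative (Γ →₀ A) →* Γ := rightHom.comp (φ.comp inl) with hκdef
  set K : Subgroup Γ := κ.range with hKdef
  have hκval : ∀ y, κ y = (φ (inl y)).right := fun _ => rfl
  have hKcent : ∀ k ∈ K, ∀ h : Γ, h * k = k * h := by
    rintro k ⟨y, rfl⟩ h
    exact fact_central hφ y rfl h
  haveI hKnormal : K.Normal := by
    constructor
    intro n hn g
    rw [hKcent n hn g, mul_inv_cancel_right]
    exact hn
  have hK2 : ∀ k ∈ K, k * k = 1 := by
    rintro k ⟨y, rfl⟩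
    rcases eq_or_ne (κ y) 1 with h1 | h1
    · rw [h1, mul_one]
    · exact (fact_ord hφ y (hκval y).symm h1).1
  -- the quotient is infinite
  haveI hIQ : Infinite (Γ ⧸ K) := by
    by_contra hinf
    haveI : Finite (Γ ⧸ K) := not_infinite_iff_finite.mp hinf
    haveI : K.FiniteIndex := Subgroup.finiteIndex_of_finite_quotient
    letI : CommGroup ↥K :=
      { (inferInstance : Group ↥K) with
        mul_comm := fun a b => Subtype.ext (hKcent b.1 b.2 a.1) }
    have htor : Monoid.IsTorsion ↥K := by
      intro z
      rw [isOfFinOrder_iff_pow_eq_one]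
      refine ⟨2, two_pos, Subtype.ext ?_⟩
      push_cast
      rw [pow_two]
      exact hK2 z.1 z.2
    haveI : Finite ↥K := CommGroup.finite_of_fg_torsion ↥K htor
    haveI : Finite Γ := Finite.of_subgroup_quotient K
    exact not_finite Γ
  -- every element of the image of the base has zero coset sums
  have caseA : ∀ y, (φ (inl y)).right ≠ 1 →
      Finsupp.mapDomain (fun g : Γ => (g : Γ ⧸ K)) (toAdd ((φ (inl y)).left)) = 0 := by
    intro y hy
    obtain ⟨hk2, _⟩ := fact_ord hφ y rfl hy
    have hinvF := fact_inv hφ y rfl rfl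
    refine mapDomain_eq_zero _ hy hk2 (fun z => ?_) (fun z => ?_) e2
    · show (((φ (inl y)).right * z : Γ) : Γ ⧸ K) = (z : Γ ⧸ K)
      have hmem : ((φ (inl y)).right : Γ ⧸ K) = 1 :=
        (QuotientGroup.eq_one_iff _).mpr ⟨y, rfl⟩
      rw [QuotientGroup.mk_mul, hmem, one_mul]
    · have h3 := DFunLike.congr_fun (congrArg toAdd hinvF) ((φ (inl y)).right * z)
      rw [toAdd_wa] at h3
      rw [← h3, inv_mul_cancel_left]
  have hSzero : ∀ y,
      Finsupp.mapDomain (fun g : Γ => (g : Γ ⧸ K)) (toAdd ((φ (inl y)).left)) = 0 := by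
    intro y
    rcases eq_or_ne ((φ (inl y)).right) 1 with h1 | h1
    · have hmul : φ (inl (y * y₀)) = φ (inl y) * φ (inl y₀) := by rw [map_mul, map_mul]
      have hky' : (φ (inl (y * y₀))).right = (φ (inl y₀)).right := by
        rw [hmul, mul_right, h1, one_mul]
      have hA := caseA (y * y₀) (by rw [hky']; exact hk₀)
      have hA0 := caseA y₀ hk₀
      have hFval : toAdd ((φ (inl (y * y₀))).left)
          = toAdd ((φ (inl y)).left) + toAdd ((φ (inl y₀)).left) := by
        have hcomp : (φ (inl y) * φ (inl y₀)).left
            = (φ (inl y)).left * wa ((φ (inl y)).right) ((φ (inl y₀)).left) := rfl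
        rw [hmul, hcomp, h1, wa_one]
        rfl
      have hmd := congrArg (Finsupp.mapDomain (fun g : Γ => (g : Γ ⧸ K))) hFval
      rw [Finsupp.mapDomain_add, hA, hA0, add_zero] at hmd
      exact hmd.symm
    · exact caseA y h1
  -- the composition kills the base group
  have hΦinl : ∀ y, qmap K (φ (inl y)) = 1 := by
    intro y
    have hdec : φ (inl y) = inl ((φ (inl y)).left) * inr ((φ (inl y)).right) :=
      (inl_left_mul_inr_right _).symm
    rw [hdec, map_mul, qmap_inl, qmap_inr]
    have h1 : redHom (A := A) K ((φ (inl y)).left) = 1 := by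
      apply Multiplicative.toAdd.injective
      rw [toAdd_redHom]
      exact hSzero y
    have h2 : (((φ (inl y)).right : Γ) : Γ ⧸ K) = 1 := (QuotientGroup.eq_one_iff _).mpr ⟨y, rfl⟩
    rw [h1, h2, map_one, map_one, one_mul]
  have hΦsurj : Function.Surjective ((qmap K).comp φ) :=
    (qmap_surjective K).comp hφ
  set θ : Γ →* WreathProduct A (Γ ⧸ K) := ((qmap K).comp φ).comp inr with hθdef
  have hθsurj : Function.Surjective θ := by
    intro w
    obtain ⟨u, hu⟩ := hΦsurj w
    refine ⟨u.right, ?_⟩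
    have hdec : u = inl u.left * inr u.right := (inl_left_mul_inr_right _).symm
    have hsplit : ((qmap K).comp φ) u
        = ((qmap K).comp φ) (inl u.left) * ((qmap K).comp φ) (inr u.right) := by
      rw [← map_mul, ← hdec]
    have hbasekill : ((qmap K).comp φ) (inl u.left) = 1 := hΦinl u.left
    rw [← hu, hsplit, hbasekill, one_mul]
    rfl
  have hθK : ∀ k ∈ K, θ k = 1 := by
    intro k hk
    apply eq_one_of_forall_commute (θ k)
    intro v
    obtain ⟨g, rfl⟩ := hθsurj v
    rw [← map_mul, ← map_mul, hKcent k hk g]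
  have hker : K ≤ θ.ker := fun k hk => MonoidHom.mem_ker.mpr (hθK k hk)
  set η : Γ ⧸ K →* WreathProduct A (Γ ⧸ K) := QuotientGroup.lift K θ hker with hηdef
  have hηsurj : Function.Surjective η := by
    intro w
    obtain ⟨g, hg⟩ := hθsurj w
    exact ⟨(g : Γ ⧸ K), by rw [hηdef, QuotientGroup.lift_mk']; exact hg⟩
  -- a nontrivial character of A with values in ZMod 2
  letI : Module (ZMod 2) A := AddCommGroup.zmodModule (n := 2) (by
    intro z
    rw [two_nsmul]
    exact e2 z)
  set bas := Module.Free.chooseBasis (ZMod 2) A with hbasdef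
  haveI : Nonempty (Module.Free.ChooseBasisIndex (ZMod 2) A) := bas.index_nonempty
  set i₀ := Classical.arbitrary (Module.Free.ChooseBasisIndex (ZMod 2) A) with hi₀
  set χ : A →+ ZMod 2 := (bas.coord i₀).toAddMonoidHom with hχdef
  have hχ : χ (bas i₀) = 1 := by
    show bas.coord i₀ (bas i₀) = 1
    rw [Module.Basis.coord_apply, Module.Basis.repr_self, Finsupp.single_eq_same]
  -- the family of homomorphisms on the quotient wreath product
  have hHbwa : ∀ (ε : ZMod 2) (gq : Γ ⧸ K) (m : Multiplicative ((Γ ⧸ K) →₀ A)),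
      (AddMonoidHom.toMultiplicative ((AddMonoidHom.mulLeft ε).comp (χ.comp sumHom)))
          (wa gq m)
        = (AddMonoidHom.toMultiplicative ((AddMonoidHom.mulLeft ε).comp (χ.comp sumHom))) m := by
    intro ε gq m
    apply Multiplicative.toAdd.injective
    show ε * χ (sumHom (Finsupp.equivMapDomain (Equiv.mulLeft gq) (toAdd m)))
      = ε * χ (sumHom (toAdd m))
    rw [sumHom_equivMapDomain]
  set HW : ((Γ ⧸ K) →* Multiplicative (ZMod 2)) → ZMod 2 →
      (WreathProduct A (Γ ⧸ K) →* Multiplicative (ZMod 2)) := fun ξ ε =>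
    SemidirectProduct.lift
      (AddMonoidHom.toMultiplicative ((AddMonoidHom.mulLeft ε).comp (χ.comp sumHom))) ξ (by
      intro gq
      apply MonoidHom.ext
      intro m
      show (AddMonoidHom.toMultiplicative ((AddMonoidHom.mulLeft ε).comp (χ.comp sumHom)))
          (wa gq m)
        = (MulAut.conj (ξ gq))
            ((AddMonoidHom.toMultiplicative ((AddMonoidHom.mulLeft ε).comp (χ.comp sumHom))) m)
      rw [hHbwa, MulAut.conj_apply, mul_comm (ξ gq), mul_inv_cancel_right]) with hHWdef
  -- homomorphisms to ZMod 2 form a finite set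
  haveI hfinHom : Finite ((Γ ⧸ K) →* Multiplicative (ZMod 2)) := by
    obtain ⟨S, hScl, hSfin⟩ := Group.fg_iff.mp (inferInstance : Group.FG (Γ ⧸ K))
    haveI := hSfin.to_subtype
    apply Finite.of_injective
      (fun (f : (Γ ⧸ K) →* Multiplicative (ZMod 2)) => (fun s : S => f s.1))
    intro f g hfg
    apply MonoidHom.ext
    intro z
    have hz : z ∈ Subgroup.closure S := hScl ▸ Subgroup.mem_top z
    induction hz using Subgroup.closure_induction with
    | mem w hw => exact congrFun hfg ⟨w, hw⟩
    | one => rw [map_one, map_one]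
    | mul a b _ _ iha ihb => rw [map_mul, map_mul, iha, ihb]
    | inv a _ iha => rw [map_inv, map_inv, iha]
  -- the injection giving the contradiction
  set T : (((Γ ⧸ K) →* Multiplicative (ZMod 2)) × ZMod 2) →
      ((Γ ⧸ K) →* Multiplicative (ZMod 2)) := fun p => (HW p.1 p.2).comp η with hTdef
  have hTinj : Function.Injective T := by
    rintro ⟨ξ, ε⟩ ⟨ξ', ε'⟩ hT
    have hback : ∀ w, HW ξ ε w = HW ξ' ε' w := by
      intro w
      obtain ⟨g, rfl⟩ := hηsurj w
      exact DFunLike.congr_fun hT g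
    have hξ : ξ = ξ' := by
      ext gq
      have hcmp := hback (inr gq)
      rwa [hHWdef, SemidirectProduct.lift_inr, SemidirectProduct.lift_inr] at hcmp
    have hε : ε = ε' := by
      have hcmp := hback (inl (ofAdd (Finsupp.single (1 : Γ ⧸ K) (bas i₀))))
      rw [hHWdef, SemidirectProduct.lift_inl, SemidirectProduct.lift_inl] at hcmp
      have h2 : ∀ δ : ZMod 2,
          (AddMonoidHom.toMultiplicative ((AddMonoidHom.mulLeft δ).comp (χ.comp sumHom)))
            (ofAdd (Finsupp.single (1 : Γ ⧸ K) (bas i₀))) = ofAdd δ := by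
        intro δ
        apply Multiplicative.toAdd.injective
        show δ * χ (sumHom (Finsupp.single (1 : Γ ⧸ K) (bas i₀))) = δ
        rw [sumHom_single, hχ, mul_one]
      rw [h2, h2] at hcmp
      exact Multiplicative.ofAdd.injective hcmp
    rw [Prod.mk.injEq]
    exact ⟨hξ, hε⟩
  haveI : Nonempty ((Γ ⧸ K) →* Multiplicative (ZMod 2)) := ⟨1⟩
  have hc1 := Nat.card_le_card_of_injective T hTinj
  rw [Nat.card_prod, Nat.card_zmod] at hc1
  have hc3 : 0 < Nat.card ((Γ ⧸ K) →* Multiplicative (ZMod 2)) := Nat.card_pos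
  omega
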